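/- Let n ≥ 2 and let x be an n×n real matrix with det(x) = 1 that is diagonalizable over ℂ. Let a_1, …, a_n ∈ ℂ be the eigenvalues of x (the roots of its characteristic polynomial p_x counted with multiplicity) and set ℓ(x) = sqrt(Σ_{i=1}^n 2(log|a_i|)^2). Then 2·√(2/n)·log(M(p_x)) ≤ ℓ(x) ≤ 2·log(M(p_x)). -/

import Mathlib

/-- **Mahler–Length bounds for matrices.** If `x ∈ SL_n(ℝ)` is diagonalizable over `ℂ`
(semisimple) with eigenvalues `a₁, …, aₙ` (the roots of its characteristic polynomial,
with multiplicity), then `2 √(2/n) log M(p_x) ≤ ℓ(x) ≤ 2 log M(p_x)` where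
`ℓ(x) = √(∑ 2 (log |aᵢ|)²)` and `M(p_x) = ∏ max 1 |aᵢ|`. -/
theorem stmt_4 (n : ℕ) (hn : 2 ≤ n) (x : Matrix (Fin n) (Fin n) ℝ) (hdet : x.det = 1)
    (hss : ∃ (P : Matrix (Fin n) (Fin n) ℂ) (d : Fin n → ℂ),
      IsUnit P ∧ x.map Complex.ofReal = P * Matrix.diagonal d * P⁻¹)
    (a : Fin n → ℂ)
    (ha : (x.map Complex.ofReal).charpoly = ∏ i, (Polynomial.X - Polynomial.C (a i))) :
    2 * Real.sqrt (2 / n) * Real.log (∏ i, max 1 (‖a i‖)) ≤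
      Real.sqrt (∑ i, 2 * (Real.log (‖a i‖)) ^ 2) ∧
    Real.sqrt (∑ i, 2 * (Real.log (‖a i‖)) ^ 2) ≤
      2 * Real.log (∏ i, max 1 (‖a i‖)) := by
  classical
  set L : Fin n → ℝ := fun i => Real.log (‖a i‖) with hLdef
  -- determinant over ℂ is 1
  have hdetC : (x.map Complex.ofReal).det = 1 := by
    rw [show (Complex.ofReal : ℝ → ℂ) = ⇑Complex.ofRealHom from rfl,
      ← RingHom.mapMatrix_apply, ← RingHom.map_det, hdet, map_one]
  -- product of eigenvalues is 1
  have hprodA : ∏ i, a i = 1 := by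
    have h1 := Matrix.det_eq_sign_charpoly_coeff (x.map Complex.ofReal)
    rw [hdetC, ha, Polynomial.coeff_zero_eq_eval_zero, Polynomial.eval_prod] at h1
    simp only [Polynomial.eval_sub, Polynomial.eval_X, Polynomial.eval_C, zero_sub] at h1
    have h2 : ∏ i, (-a i) = (-1:ℂ)^n * ∏ i, a i := by
      calc ∏ i, (-a i) = ∏ i, ((-1:ℂ) * a i) :=
            Finset.prod_congr rfl fun i _ => (neg_one_mul _).symm
        _ = (-1:ℂ)^n * ∏ i, a i := by
            rw [Finset.prod_mul_distrib, Finset.prod_const, Finset.card_univ, Fintype.card_fin]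
    rw [h2, Fintype.card_fin, ← mul_assoc, ← mul_pow] at h1
    simpa using h1.symm
  have hprodabs : ∏ i, ‖a i‖ = 1 := by
    rw [← norm_prod, hprodA, norm_one]
  have habspos : ∀ i, 0 < ‖a i‖ := by
    intro i
    rcases eq_or_lt_of_le (norm_nonneg (a i)) with h | h
    · exfalso
      have : ∏ i, ‖a i‖ = 0 :=
        Finset.prod_eq_zero (Finset.mem_univ i) h.symm
      rw [hprodabs] at this; norm_num at this
    · exact h
  have hsumL : ∑ i, L i = 0 := by
    rw [hLdef, ← Real.log_prod (fun i _ => (habspos i).ne'), hprodabs, Real.log_one]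
  -- positive and negative parts
  set P := ∑ i, max (L i) 0 with hPdef
  set N := ∑ i, max (-L i) 0 with hNdef
  have hPnonneg : 0 ≤ P := Finset.sum_nonneg fun i _ => le_max_right _ _
  have hPN : P = N := by
    have : P - N = 0 := by
      rw [hPdef, hNdef, ← Finset.sum_sub_distrib]
      calc ∑ i, (max (L i) 0 - max (-L i) 0) = ∑ i, L i := by
            refine Finset.sum_congr rfl fun i _ => ?_
            rcases le_total (L i) 0 with h | h
            · rw [max_eq_right h, max_eq_left (neg_nonneg.mpr h)]; ring
            · rw [max_eq_left h, max_eq_right (neg_nonpos.mpr h)]; ring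
        _ = 0 := hsumL
    linarith
  -- log of Mahler measure equals P
  have hlogM : Real.log (∏ i, max 1 (‖a i‖)) = P := by
    rw [Real.log_prod (fun i _ => by positivity), hPdef]
    refine Finset.sum_congr rfl fun i _ => ?_
    rcases le_total 1 (‖a i‖) with h | h
    · rw [max_eq_right h, max_eq_left (Real.log_nonneg h)]
    · rw [max_eq_left h, max_eq_right (Real.log_nonpos (norm_nonneg _) h),
        Real.log_one]
  -- sum of squares decomposition
  have hsq : ∑ i, L i ^ 2 = ∑ i, ((max (L i) 0) ^ 2 + (max (-L i) 0) ^ 2) := by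
    refine Finset.sum_congr rfl fun i _ => ?_
    rcases le_total (L i) 0 with h | h
    · rw [max_eq_right h, max_eq_left (neg_nonneg.mpr h)]; ring
    · rw [max_eq_left h, max_eq_right (neg_nonpos.mpr h)]; ring
  constructor
  · -- lower bound
    rw [hlogM]
    have h2P : 2 * P = ∑ i, |L i| := by
      rw [two_mul]
      nth_rewrite 2 [hPN]
      rw [hPdef, hNdef, ← Finset.sum_add_distrib]
      exact Finset.sum_congr rfl fun i _ => max_zero_add_max_neg_zero_eq_abs_self (L i)
    have hcs : (∑ i, |L i|) ^ 2 ≤ (n : ℝ) * ∑ i, L i ^ 2 := by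
      have := sq_sum_le_card_mul_sum_sq (s := Finset.univ) (f := fun i => |L i|)
      simpa [sq_abs] using this
    have hn0 : (0:ℝ) < n := by positivity
    rw [show ∑ i, 2 * L i ^ 2 = 2 * ∑ i, L i ^ 2 by rw [Finset.mul_sum]]
    rw [show 2 * Real.sqrt (2 / n) * P = Real.sqrt (2 / n) * (2 * P) by ring]
    have hle : Real.sqrt (2 / n) * (2 * P) =
        Real.sqrt ((2 / n) * (2 * P) ^ 2) := by
      rw [Real.sqrt_mul (by positivity), Real.sqrt_sq (by linarith)]
    rw [hle]
    apply Real.sqrt_le_sqrt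
    rw [h2P]
    calc 2 / (n:ℝ) * (∑ i, |L i|) ^ 2 ≤ 2 / n * ((n : ℝ) * ∑ i, L i ^ 2) := by
          apply mul_le_mul_of_nonneg_left hcs (by positivity)
      _ = 2 * ∑ i, L i ^ 2 := by field_simp
  · -- upper bound
    rw [hlogM]
    have hkey : ∑ i, 2 * L i ^ 2 ≤ (2 * P) ^ 2 := by
      rw [show ∑ i, 2 * L i ^ 2 = 2 * ∑ i, L i ^ 2 by rw [Finset.mul_sum], hsq,
        Finset.sum_add_distrib]
      have h1 : ∑ i, (max (L i) 0) ^ 2 ≤ P ^ 2 := by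
        rw [hPdef]
        exact Finset.sum_sq_le_sq_sum_of_nonneg fun i _ => le_max_right _ _
      have h2 : ∑ i, (max (-L i) 0) ^ 2 ≤ N ^ 2 := by
        rw [hNdef]
        exact Finset.sum_sq_le_sq_sum_of_nonneg fun i _ => le_max_right _ _
      rw [← hPN] at h2
      nlinarith
    calc Real.sqrt (∑ i, 2 * L i ^ 2) ≤ Real.sqrt ((2 * P) ^ 2) :=
          Real.sqrt_le_sqrt hkey
      _ = 2 * P := Real.sqrt_sq (by linarith)
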